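/- For any word X = x₁x₂⋯x_N in the free group on generators u, d, and any states S_l, S_r, the conjugation X_l(S_l, ±3)·X·X_r(S_r, ∓3) equals the word X̄ = x̄₁x̄₂⋯x̄_N obtained by swapping u ↔ d (and u⁻¹ ↔ d⁻¹) in each letter, as elements of the braid group B₃ = ⟨u,d | udu = dud⟩. -/

import Mathlib

namespace BraidQG

/-- Generators of the braid group `B₃`: `true ↦ u`, `false ↦ d`. -/
abbrev Gen := Bool

/-- Crossing sequences, viewed as elements of the free group on `u, d`. -/
abbrev Word := FreeGroup Gen

/-- The upper crossing generator `u`. -/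
def u : Word := FreeGroup.of true

/-- The lower crossing generator `d`. -/
def d : Word := FreeGroup.of false

/-- Node states are `Bool`: `true ↦ +`, `false ↦ −`.  `negPow m S = (−)^m S`. -/
def negPow (m : ℤ) (S : Bool) : Bool := if Even m then S else !S

/-- The sign value of a state, in `{1, −1}`. -/
def sgn (S : Bool) : ℤ := if S then 1 else -1

/-- The rotation word `X_l(S, m)`:
`X_l(+,m) = (ud)^(−m/2)` (`m` even), `d(ud)^((−1−m)/2)` (`m` odd);
`X_l(−,m) = (du)^(−m/2)` (`m` even), `u(du)^((−1−m)/2)` (`m` odd). -/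
def Xl (S : Bool) (m : ℤ) : Word :=
  if Even m then (if S then u * d else d * u) ^ (-(m / 2))
  else (if S then d else u) * (if S then u * d else d * u) ^ ((-1 - m) / 2)

/-- The rotation word `X_r(S, n)`:
`X_r(+,n) = (ud)^(−n/2)` (`n` even), `(ud)^((1−n)/2) d⁻¹` (`n` odd);
`X_r(−,n) = (du)^(−n/2)` (`n` even), `(du)^((1−n)/2) u⁻¹` (`n` odd). -/
def Xr (S : Bool) (n : ℤ) : Word :=
  if Even n then (if S then u * d else d * u) ^ (-(n / 2))
  else (if S then u * d else d * u) ^ ((1 - n) / 2) * (if S then d else u)⁻¹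

/-- The number of crossings of a crossing sequence: the length of the (reduced) word. -/
def len (X : Word) : ℕ := X.toWord.length

/-- The sum of crossing numbers of a word: `u, d` count `+1`, `u⁻¹, d⁻¹` count `−1`. -/
def crossSum (X : Word) : ℤ := (X.toWord.map (fun p => if p.2 then (1 : ℤ) else -1)).sum

/-- The transposition `(1 2)` on strand positions `{1,2,3} ≅ {0,1,2}`. -/
def c12 : Equiv.Perm (Fin 3) := Equiv.swap 0 1

/-- The transposition `(2 3)` on strand positions. -/
def c23 : Equiv.Perm (Fin 3) := Equiv.swap 1 2

/-- One `π/3`-rotation step acting on pairs (state, permutation accumulated so far):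
`step (S, p) = ((−)S, P^S₁ * p)` with `P⁺₁ = (1 2)` and `P⁻₁ = (2 3)`. -/
def step : Equiv.Perm (Bool × Equiv.Perm (Fin 3)) where
  toFun x := (!x.1, (if x.1 then c12 else c23) * x.2)
  invFun x := (!x.1, (if !x.1 then c12 else c23) * x.2)
  left_inv := by
    rintro ⟨b, p⟩
    cases b <;> simp [c12, c23, ← mul_assoc, Equiv.swap_mul_self]
  right_inv := by
    rintro ⟨b, p⟩
    cases b <;> simp [c12, c23, ← mul_assoc, Equiv.swap_mul_self]

/-- The rotation permutation `P^S_m ∈ S₃`, defined by the recursion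
`P^S_0 = 1`, `P^S_{m+1} = P^{(−)^m S}_1 * P^S_m` (and the corresponding downward
recursion), realized as the `m`-th power of the single rotation step. -/
def P (S : Bool) (m : ℤ) : Equiv.Perm (Fin 3) := ((step ^ m) (S, 1)).2

/-- A braid (diagram) as the `8`-tuple `(T_l, S_l, (T_a,T_b,T_c), X, S_r, T_r)`;
the internal-twist triple is a function `Fin 3 → ℤ`. -/
structure Braid where
  Tl : ℤ
  Sl : Bool
  T : Fin 3 → ℤ
  X : Word
  Sr : Bool
  Tr : ℤ

/-- The general rotation `R_{m,n}` on braids. -/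
def rotate (m n : ℤ) (B : Braid) : Braid where
  Tl := B.Tl + m
  Sl := negPow m B.Sl
  T := fun i => B.T (P B.Sl m i) - m - n
  X := Xl B.Sl m * B.X * Xr B.Sr n
  Sr := negPow n B.Sr
  Tr := B.Tr + n

/-- The effective twist number `Θ = T_l + T_r + (T_a + T_b + T_c) − 2 Σᵢ xᵢ`. -/
def Θ (B : Braid) : ℤ :=
  B.Tl + B.Tr + (B.T 0 + B.T 1 + B.T 2) - 2 * crossSum B.X

/-- The effective state `χ = (−1)^{|X|} S_l S_r ∈ {1, −1}`. -/
def χ (B : Braid) : ℤ := (-1) ^ len B.X * sgn B.Sl * sgn B.Sr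

/-- `Reachable A B`: `B` is obtained from `A` by some finite sequence of rotations. -/
def Reachable : Braid → Braid → Prop :=
  Relation.ReflTransGen (fun A B => ∃ m n : ℤ, B = rotate m n A)

/-- A braid is actively-interacting iff it can be rotated to a trivial braid diagram
(empty crossing sequence, equal end-node states). -/
def Active (B : Braid) : Prop :=
  ∃ B', Reachable B B' ∧ B'.X = 1 ∧ B'.Sl = B'.Sr

/-- The defining braid relation `udu = dud` of `B₃`. -/
def braidRel : Set (FreeGroup Gen) := {u * d * u * (d * u * d)⁻¹}

/-- The braid group `B₃ = ⟨u, d ∣ udu = dud⟩`. -/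
abbrev B3 := PresentedGroup braidRel

/-- The canonical projection of crossing sequences into `B₃`. -/
def pr : FreeGroup Gen →* B3 := FreeGroup.lift fun b => PresentedGroup.of b

/-- The generator `u` of `B₃`. -/
def bu : B3 := PresentedGroup.of true

/-- The generator `d` of `B₃`. -/
def bd : B3 := PresentedGroup.of false

/-- The bar map swapping `u ↔ d` (and `u⁻¹ ↔ d⁻¹`) letterwise. -/
def bar : Word →* Word := FreeGroup.map Bool.not

/-- The simultaneous rotation `R_{3k,−3k}` on braids: external twists shift by `±3k`,
states flip by `(−1)^k`, the triple is permuted by `(1 3)^k`, and the letter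
swap `u ↔ d` is applied to `X` exactly when `k` is odd. -/
def rot3k (k : ℤ) (B : Braid) : Braid where
  Tl := B.Tl + 3 * k
  Sl := negPow k B.Sl
  T := fun i => B.T (((Equiv.swap 0 2 : Equiv.Perm (Fin 3)) ^ k) i)
  X := if Even k then B.X else bar B.X
  Sr := negPow k B.Sr
  Tr := B.Tr - 3 * k

/-- The interaction `B + B'` of an active braid `B` (trivial representative)
onto a passive braid `B'` (zero-external-twist representative), from the left. -/
def interact (B B' : Braid) : Braid where
  Tl := 0
  Sl := negPow B.Tl B.Sl
  T := fun i =>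
    B.T (P B.Sl (-B.Tl) i) + B'.T (P (negPow B.Tr B.Sl) (-B.Tl - B.Tr) i)
      + (B.Tl + B.Tr)
  X := Xl (negPow B.Tr B.Sl) (-B.Tl - B.Tr) * B'.X
  Sr := B'.Sr
  Tr := 0

/-- The permutation `σ_X ∈ S₃` induced by a crossing sequence `X`
(`u` induces `(1 2)`, `d` induces `(2 3)`). -/
def σX : Word →* Equiv.Perm (Fin 3) := FreeGroup.lift fun b => if b then c12 else c23

/-- The interaction `B' + B` of an active braid `B` (with `T_r = 0`, rotated to its
right-twist-only trivial representative) onto a passive braid `B'` from the right. -/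
def interactR (B' B : Braid) : Braid where
  Tl := 0
  Sl := B'.Sl
  T := fun i => (B'.T i + B.Tl) + B.T (P B.Sl (-B.Tl) ((σX B'.X)⁻¹ i))
  X := B'.X * Xr B'.Sr (-B.Tl)
  Sr := B'.Sl
  Tr := 0



lemma pr_eq : pr = PresentedGroup.mk braidRel := by
  ext b; rfl

lemma pr_u : pr u = bu := rfl
lemma pr_d : pr d = bd := rfl

lemma braid_rel : bu * bd * bu = bd * bu * bd := by
  have h : pr (u * d * u * (d * u * d)⁻¹) = 1 := by
    rw [pr_eq]
    exact (QuotientGroup.eq_one_iff _).mpr (Subgroup.subset_normalClosure rfl)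
  simp only [map_mul, map_inv, pr_u, pr_d] at h
  exact mul_inv_eq_one.mp h

/-- The half-twist `Δ = udu` in `B₃`. -/
def Δ : B3 := bu * bd * bu

lemma Δ_def : Δ = bu * bd * bu := rfl

lemma Δ_eq : Δ = bd * bu * bd := braid_rel

lemma conj_u : Δ * bu * Δ⁻¹ = bd := by
  rw [Δ_def]
  rw [show bu * bd * bu * bu * (bu * bd * bu)⁻¹
      = bu * bd * bu * (bd⁻¹ * bu⁻¹) by group, braid_rel]
  group

lemma conj_d : Δ * bd * Δ⁻¹ = bu := by
  rw [Δ_eq]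
  rw [show bd * bu * bd * bd * (bd * bu * bd)⁻¹
      = bd * bu * bd * (bu⁻¹ * bd⁻¹) by group, ← braid_rel]
  group

lemma conj_bar (X : Word) : Δ * pr X * Δ⁻¹ = pr (bar X) := by
  induction X using FreeGroup.induction_on with
  | C1 => simp [bar]
  | of b =>
    cases b
    · simpa [bar, pr, FreeGroup.lift_apply_of, bd, bu] using conj_d
    · simpa [bar, pr, FreeGroup.lift_apply_of, bd, bu] using conj_u
  | inv_of b ih =>
    simp only [map_inv]; rw [← ih]; group
  | mul x y ihx ihy =>
    simp only [map_mul]; rw [← ihx, ← ihy]; group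

lemma bar_bar (X : Word) : bar (bar X) = X := by
  induction X using FreeGroup.induction_on with
  | C1 => simp
  | of b =>
    show bar (bar (FreeGroup.of b)) = FreeGroup.of b
    rw [show bar (FreeGroup.of b) = FreeGroup.of (!b) from FreeGroup.map.of,
      show bar (FreeGroup.of (!b)) = FreeGroup.of (!(!b)) from FreeGroup.map.of,
      Bool.not_not]
  | inv_of b ih => simp only [map_inv]; rw [ih]
  | mul x y ihx ihy => simp only [map_mul]; rw [ihx, ihy]

lemma inv_conj_bar (X : Word) : Δ⁻¹ * pr X * Δ = pr (bar X) := by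
  have h := conj_bar (bar X)
  rw [bar_bar] at h
  rw [← h]; group

lemma pr_Xl_neg (S : Bool) : pr (Xl S (-3)) = Δ := by
  rw [show Xl S (-3)
      = (if S then d else u) * (if S then u * d else d * u) ^ ((-1 - (-3)) / 2 : ℤ)
      from if_neg (by decide),
    show ((-1 - (-3)) / 2 : ℤ) = 1 by norm_num, zpow_one]
  cases S
  · show pr (u * (d * u)) = Δ
    simp only [map_mul, pr_u, pr_d, Δ_def, mul_assoc]
  · show pr (d * (u * d)) = Δ
    rw [Δ_eq]; simp only [map_mul, pr_u, pr_d, mul_assoc]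

lemma pr_Xl_pos (S : Bool) : pr (Xl S 3) = Δ⁻¹ := by
  rw [show Xl S 3
      = (if S then d else u) * (if S then u * d else d * u) ^ ((-1 - 3) / 2 : ℤ)
      from if_neg (by decide),
    show ((-1 - 3) / 2 : ℤ) = -2 by norm_num]
  cases S
  · show pr (u * (d * u) ^ (-2 : ℤ)) = Δ⁻¹
    rw [Δ_eq]; simp only [map_mul, map_zpow, map_inv, pr_u, pr_d, zpow_neg,
      show (2:ℤ) = (2:ℕ) from rfl, zpow_natCast, pow_succ, pow_zero, one_mul, mul_inv_rev]
    group
  · show pr (d * (u * d) ^ (-2 : ℤ)) = Δ⁻¹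
    rw [Δ_def]; simp only [map_mul, map_zpow, map_inv, pr_u, pr_d, zpow_neg,
      show (2:ℤ) = (2:ℕ) from rfl, zpow_natCast, pow_succ, pow_zero, one_mul, mul_inv_rev]
    group

lemma pr_Xr_neg (S : Bool) : pr (Xr S (-3)) = Δ := by
  rw [show Xr S (-3)
      = (if S then u * d else d * u) ^ ((1 - (-3)) / 2 : ℤ) * (if S then d else u)⁻¹
      from if_neg (by decide),
    show ((1 - (-3)) / 2 : ℤ) = 2 by norm_num]
  cases S
  · show pr ((d * u) ^ (2 : ℤ) * u⁻¹) = Δ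
    rw [Δ_eq]; simp only [map_mul, map_zpow, map_inv, pr_u, pr_d, zpow_neg, zpow_one,
      show (2:ℤ) = (2:ℕ) from rfl, zpow_natCast, pow_succ, pow_zero, one_mul, mul_inv_rev]
    group
  · show pr ((u * d) ^ (2 : ℤ) * d⁻¹) = Δ
    rw [Δ_def]; simp only [map_mul, map_zpow, map_inv, pr_u, pr_d, zpow_neg, zpow_one,
      show (2:ℤ) = (2:ℕ) from rfl, zpow_natCast, pow_succ, pow_zero, one_mul, mul_inv_rev]
    group

lemma pr_Xr_pos (S : Bool) : pr (Xr S 3) = Δ⁻¹ := by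
  rw [show Xr S 3
      = (if S then u * d else d * u) ^ ((1 - 3) / 2 : ℤ) * (if S then d else u)⁻¹
      from if_neg (by decide),
    show ((1 - 3) / 2 : ℤ) = -1 by norm_num]
  cases S
  · show pr ((d * u) ^ (-1 : ℤ) * u⁻¹) = Δ⁻¹
    rw [Δ_def]; simp only [map_mul, map_zpow, map_inv, pr_u, pr_d, zpow_neg, zpow_one,
      show (2:ℤ) = (2:ℕ) from rfl, zpow_natCast, pow_succ, pow_zero, one_mul, mul_inv_rev]
    group
  · show pr ((u * d) ^ (-1 : ℤ) * d⁻¹) = Δ⁻¹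
    rw [Δ_eq]; simp only [map_mul, map_zpow, map_inv, pr_u, pr_d, zpow_neg, zpow_one,
      show (2:ℤ) = (2:ℕ) from rfl, zpow_natCast, pow_succ, pow_zero, one_mul, mul_inv_rev]
    group


/-- for any word `X` and states `S_l, S_r`, the conjugation
`X_l(S_l, ±3) · X · X_r(S_r, ∓3)` equals the word `X̄` obtained by swapping
`u ↔ d` in each letter, as elements of `B₃` (the sign `±` is `ε`). -/
theorem conj_three_eq_bar (X : Word) (Sl Sr : Bool) (ε : Bool) :
    pr (Xl Sl (if ε then 3 else -3)) * pr X * pr (Xr Sr (if ε then -3 else 3))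
      = pr (bar X) := by
  cases ε
  · simp only [if_false, if_true, Bool.false_eq_true]
    rw [pr_Xl_neg, pr_Xr_pos]
    exact conj_bar X
  · simp only [if_true]
    rw [pr_Xl_pos, pr_Xr_neg]
    exact inv_conj_bar X

end BraidQG
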